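/- (Main Theorem) Let κ be an infinite cardinal and {X_α : α < 2^κ} a family of compact Hausdorff spaces with t₀(X_α) ≤ κ for every α < 2^κ. Then t₀(∏_{α<2^κ} X_α) ≤ κ, i.e., every κ-continuous real-valued function on the product is continuous. -/

import Mathlib

open Cardinal Set Filter Topology
open scoped Classical

universe u

namespace FTProd




variable {κ : Cardinal.{u}}

lemma insert_mk_le {Z : Type u} (hκ : ℵ₀ ≤ κ) {D : Set Z} (hD : #D ≤ κ) (z : Z) :
    #(insert z D : Set Z) ≤ κ := by
  refine le_trans (Cardinal.mk_insert_le) ?_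
  calc #D + 1 ≤ κ + κ := add_le_add hD (le_trans Cardinal.one_le_aleph0 hκ)
    _ = κ := Cardinal.add_eq_self hκ

/-- L0: a κ-continuous real function on a space with a dense subset of
cardinality ≤ κ is continuous. -/
lemma continuous_of_dense {Z : Type u} [TopologicalSpace Z] (hκ : ℵ₀ ≤ κ)
    (h : Z → ℝ) (hk : ∀ B : Set Z, #B ≤ κ → ContinuousOn h B)
    (D : Set Z) (hdense : Dense D) (hDk : #D ≤ κ) : Continuous h := by
  rw [continuous_iff_continuousAt]
  intro z
  rw [ContinuousAt, Metric.tendsto_nhds]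
  intro ε hε
  have hz : ContinuousWithinAt h (insert z D) z :=
    hk (insert z D) (insert_mk_le hκ hDk z) z (mem_insert _ _)
  have hz' := (Metric.tendsto_nhds.mp hz) (ε/3) (by linarith)
  rw [eventually_iff, mem_nhdsWithin] at hz'
  obtain ⟨U, hUopen, hzU, hU⟩ := hz'
  have key : ∀ y ∈ U, dist (h y) (h z) < ε := by
    intro y hy
    have hyc : ContinuousWithinAt h (insert y D) y :=
      hk (insert y D) (insert_mk_le hκ hDk y) y (mem_insert _ _)
    have hyc' := (Metric.tendsto_nhds.mp hyc) (ε/3) (by linarith)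
    rw [eventually_iff, mem_nhdsWithin] at hyc'
    obtain ⟨V, hVopen, hyV, hV⟩ := hyc'
    obtain ⟨d, hdD, hdUV⟩ := hdense.exists_mem_open (hUopen.inter hVopen) ⟨y, hy, hyV⟩
    have h1 : dist (h d) (h z) < ε/3 := hU ⟨hdUV.1, mem_insert_of_mem _ hdD⟩
    have h2 : dist (h d) (h y) < ε/3 := hV ⟨hdUV.2, mem_insert_of_mem _ hdD⟩
    calc dist (h y) (h z) ≤ dist (h y) (h d) + dist (h d) (h z) := dist_triangle _ _ _
      _ < ε/3 + ε/3 := by rw [dist_comm (h y) (h d)]; exact add_lt_add h2 h1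
      _ < ε := by linarith
  filter_upwards [hUopen.mem_nhds hzU] with y hy using key y hy

/-- L4: if `#ι ≤ 2 ^ κ` then there is a family of ≤ κ boolean patterns on ι
realizing every finite pattern.  (Combinatorial core of Hewitt–Marczewski–
Pondiczery.) -/
lemma exists_pattern_family {ι : Type u} (hκ : ℵ₀ ≤ κ) (hι : #ι ≤ 2 ^ κ) :
    ∃ (T : Type u) (e : T → ι → Bool), #T ≤ κ ∧
      ∀ (F : Finset ι) (σ : ι → Bool), ∃ t, ∀ i ∈ F, e t i = σ i := by
  set α := κ.out with hα
  have hκα : #α = κ := Cardinal.mk_out κ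
  haveI : Infinite α := Cardinal.infinite_iff.mpr (by rw [hκα]; exact hκ)
  have hle : #ι ≤ #(Set α) := by rw [Cardinal.mk_set, hκα]; exact hι
  obtain ⟨c⟩ := (Cardinal.le_def ι (Set α)).mp hle
  -- separating points for pairs
  have hsep : ∀ i j : ι, i ≠ j → ∃ x : α, ¬(x ∈ c i ↔ x ∈ c j) := by
    intro i j hij
    have : c i ≠ c j := fun hc => hij (c.injective hc)
    by_contra hcon
    push_neg at hcon
    exact this (Set.ext fun x => hcon x)
  haveI : Nonempty α := inferInstance
  set sep : ι → ι → α := fun i j =>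
    if h : i ≠ j then (hsep i j h).choose else Classical.arbitrary α with hsepdef
  refine ⟨Finset α × Finset (Finset α),
    fun t i => decide ((t.1.filter (fun x => x ∈ c i)) ∈ t.2), ?_, ?_⟩
  · have h1 : #(Finset α) = κ := by rw [Cardinal.mk_finset_of_infinite, hκα]
    haveI : Infinite (Finset α) := inferInstance
    have h2 : #(Finset (Finset α)) = κ := by rw [Cardinal.mk_finset_of_infinite, h1]
    have : #(Finset α × Finset (Finset α)) = κ * κ := by
      rw [Cardinal.mk_prod, Cardinal.lift_id, Cardinal.lift_id, h1, h2]
    rw [this, Cardinal.mul_eq_self hκ]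
  · intro F σ
    set s : Finset α := (F ×ˢ F).image (fun p => sep p.1 p.2) with hs
    -- distinct filters on F
    have hdist : ∀ i ∈ F, ∀ j ∈ F, i ≠ j →
        s.filter (fun x => x ∈ c i) ≠ s.filter (fun x => x ∈ c j) := by
      intro i hi j hj hij
      have hx := (hsep i j hij).choose_spec
      set x := (hsep i j hij).choose
      have hxs : x ∈ s := by
        apply Finset.mem_image.mpr
        refine ⟨(i, j), Finset.mem_product.mpr ⟨hi, hj⟩, ?_⟩
        simp only [hsepdef, dif_pos hij]
        rfl
      intro hcon
      have := Finset.ext_iff.mp hcon x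
      simp only [Finset.mem_filter, hxs, true_and] at this
      exact hx this
    refine ⟨⟨s, (F.filter (fun i => σ i = true)).image
      (fun i => s.filter (fun x => x ∈ c i))⟩, ?_⟩
    intro i hi
    by_cases hσ : σ i = true
    · rw [hσ]
      simp only [decide_eq_true_eq]
      exact Finset.mem_image.mpr ⟨i, Finset.mem_filter.mpr ⟨hi, hσ⟩, rfl⟩
    · have hσ' : σ i = false := by
        cases hb : σ i
        · rfl
        · exact absurd hb hσ
      rw [hσ']
      simp only [decide_eq_false_iff_not]
      intro hmem
      obtain ⟨j, hj, hji⟩ := Finset.mem_image.mp hmem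
      obtain ⟨hjF, hjσ⟩ := Finset.mem_filter.mp hj
      have hij : i ≠ j := by
        intro h
        rw [h] at hσ
        exact hσ hjσ
      exact hdist j hjF i hi (Ne.symm hij) hji





variable {κ : Cardinal.{u}}

/-- helper: a cluster point of `map m F` gives a nontrivial filter `F ⊓ comap m (𝓝 y)`. -/
lemma neBot_inf_comap {α β : Type*} [TopologicalSpace β] {F : Filter α} {m : α → β} {y : β}
    (h : ClusterPt y (map m F)) : (F ⊓ comap m (𝓝 y)).NeBot := by
  constructor
  intro hbot
  rw [Filter.inf_eq_bot_iff] at hbot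
  obtain ⟨U, hU, V, hV, hUV⟩ := hbot
  obtain ⟨W, hW, hWV⟩ := Filter.mem_comap.mp hV
  have hcl : 𝓝 y ⊓ map m F = ⊥ := by
    rw [Filter.inf_eq_bot_iff]
    refine ⟨W, hW, m '' U, Filter.image_mem_map hU, ?_⟩
    ext b
    simp only [Set.mem_inter_iff, Set.mem_image, Set.mem_empty_iff_false, iff_false]
    rintro ⟨hbW, a, haU, rfl⟩
    have : a ∈ U ∩ V := ⟨haU, hWV hbW⟩
    rw [hUV] at this
    exact this
  exact h.ne hcl

lemma prod_set_mk_le (hκ : ℵ₀ ≤ κ) {A₁ : Type u} {A₂ : Type u} {S : Set A₁} {T : Set A₂}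
    (hS : #S ≤ κ) (hT : #T ≤ κ) : #(S ×ˢ T : Set (A₁ × A₂)) ≤ κ := by
  have : #(S ×ˢ T : Set (A₁ × A₂)) = #S * #T := by
    rw [Cardinal.mk_congr (Equiv.Set.prod S T), Cardinal.mk_prod,
      Cardinal.lift_id, Cardinal.lift_id]
  rw [this]
  calc #S * #T ≤ κ * κ := mul_le_mul' hS hT
    _ = κ := Cardinal.mul_eq_self hκ

lemma insert_mk_le' {Z : Type u} (hκ : ℵ₀ ≤ κ) {D : Set Z} (hD : #D ≤ κ) (z : Z) :
    #(insert z D : Set Z) ≤ κ := by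
  refine le_trans (Cardinal.mk_insert_le) ?_
  calc #D + 1 ≤ κ + κ := add_le_add hD (le_trans Cardinal.one_le_aleph0 hκ)
    _ = κ := Cardinal.add_eq_self hκ

/-- L2 (two-factor lemma): if every κ-continuous real function on `A` is
continuous, `Y` is compact, `H` is κ-continuous with continuous `Y`-slices,
then `H` is continuous. -/
lemma twofactor {A : Type u} {Y : Type u} [TopologicalSpace A] [TopologicalSpace Y]
    [CompactSpace Y] (hκ : ℵ₀ ≤ κ)
    (hA : ∀ g : A → ℝ, (∀ B : Set A, #B ≤ κ → ContinuousOn g B) → Continuous g)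
    (H : A × Y → ℝ)
    (hH : ∀ B : Set (A × Y), #B ≤ κ → ContinuousOn H B)
    (hslice : ∀ a, Continuous fun y => H (a, y)) :
    Continuous H := by
  rcases isEmpty_or_nonempty Y with hY | hY
  · rw [continuous_iff_continuousAt]
    intro x
    exact (hY.false x.2).elim
  -- the map into C(Y, ℝ)
  set φ : A → C(Y, ℝ) := fun a => ⟨fun y => H (a, y), hslice a⟩ with hφ
  -- Step A : φ is κ-continuous into the sup metric
  have key : ∀ S : Set A, #S ≤ κ → ContinuousOn φ S := by
    intro S hS a₀ ha₀
    by_contra hcont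
    rw [ContinuousWithinAt, Metric.tendsto_nhds] at hcont
    push_neg at hcont
    obtain ⟨ε, hε, hfreq⟩ := hcont
    -- the filter of points in S at φ-distance ≥ ε from a₀
    have hL : (𝓝[S ∩ {a | ε ≤ dist (φ a) (φ a₀)}] a₀).NeBot := by
      rw [nhdsWithin_inter' a₀ S {a | ε ≤ dist (φ a) (φ a₀)}]
      exact Filter.frequently_iff_neBot.mp hfreq
    set S' : Set A := S ∩ {a | ε ≤ dist (φ a) (φ a₀)} with hS'def
    -- witnesses
    have hwit : ∀ a, ε ≤ dist (φ a) (φ a₀) → ∃ y, ε/2 < dist (H (a, y)) (H (a₀, y)) := by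
      intro a ha
      by_contra hcon
      push_neg at hcon
      have : dist (φ a) (φ a₀) ≤ ε/2 := by
        rw [ContinuousMap.dist_le (by linarith)]
        intro y
        exact hcon y
      linarith
    set ya : A → Y := fun a =>
      if h : ∃ y, ε/2 < dist (H (a, y)) (H (a₀, y)) then h.choose else Classical.arbitrary Y
      with hya
    have hya' : ∀ a ∈ S', ε/2 < dist (H (a, ya a)) (H (a₀, ya a)) := by
      intro a ha
      have h1 := hwit a ha.2
      simp only [hya, dif_pos h1]
      exact h1.choose_spec
    -- cluster point of the witnesses
    obtain ⟨y', -, hy'⟩ := isCompact_univ.exists_clusterPt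
      (f := map ya (𝓝[S'] a₀)) (le_principal_iff.mpr univ_mem)
    haveI hFne : ((𝓝[S'] a₀) ⊓ comap ya (𝓝 y')).NeBot := neBot_inf_comap hy'
    set ℱ := (𝓝[S'] a₀) ⊓ comap ya (𝓝 y') with hℱ
    have hfst : Tendsto (fun a : A => a) ℱ (𝓝 a₀) :=
      tendsto_id.mono_left (le_trans inf_le_left nhdsWithin_le_nhds)
    have hsnd : Tendsto ya ℱ (𝓝 y') := tendsto_iff_comap.mpr inf_le_right
    have hmemS' : ∀ᶠ a in ℱ, a ∈ S' :=
      Filter.mem_of_superset ((inf_le_left : ℱ ≤ 𝓝[S'] a₀) self_mem_nhdsWithin)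
        (fun a ha => ha)
    -- the small set where we use κ-continuity
    set B : Set (A × Y) := (insert a₀ S') ×ˢ (insert y' (ya '' S')) with hB
    have hBk : #B ≤ κ := by
      apply prod_set_mk_le hκ
      · exact insert_mk_le' hκ (le_trans (Cardinal.mk_le_mk_of_subset inter_subset_left) hS) a₀
      · exact insert_mk_le' hκ (le_trans Cardinal.mk_image_le
          (le_trans (Cardinal.mk_le_mk_of_subset inter_subset_left) hS)) y'
    have hp₀ : (a₀, y') ∈ B := Set.mem_prod.mpr ⟨mem_insert _ _, mem_insert _ _⟩
    have hpair : Tendsto (fun a => (a, ya a)) ℱ (𝓝[B] (a₀, y')) := by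
      rw [tendsto_nhdsWithin_iff]
      constructor
      · exact hfst.prodMk_nhds hsnd
      · filter_upwards [hmemS'] with a ha
        exact Set.mem_prod.mpr ⟨mem_insert_of_mem _ ha, mem_insert_of_mem _ ⟨a, ha, rfl⟩⟩
    have t1 : Tendsto (fun a => H (a, ya a)) ℱ (𝓝 (H (a₀, y'))) :=
      Filter.Tendsto.comp (hH B hBk (a₀, y') hp₀) hpair
    have t2 : Tendsto (fun a => H (a₀, ya a)) ℱ (𝓝 (H (a₀, y'))) :=
      ((hslice a₀).tendsto y').comp hsnd
    have tdist : Tendsto (fun a => dist (H (a, ya a)) (H (a₀, ya a))) ℱ (𝓝 0) := by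
      have := t1.dist t2
      rwa [dist_self] at this
    have hev : ∀ᶠ a in ℱ, ε/2 ≤ dist (H (a, ya a)) (H (a₀, ya a)) := by
      filter_upwards [hmemS'] with a ha using le_of_lt (hya' a ha)
    have : ε/2 ≤ 0 := ge_of_tendsto tdist hev
    linarith
  -- Step B : φ is continuous
  have hφcont : Continuous φ := by
    rw [continuous_iff_continuousAt]
    intro a₀
    set ψ : A → ℝ := fun a => dist (φ a) (φ a₀) with hψ
    have hψk : ∀ B : Set A, #B ≤ κ → ContinuousOn ψ B := by
      intro B hBk
      have : ContinuousOn φ B :=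
        (key (insert a₀ B) (insert_mk_le' hκ hBk a₀)).mono (subset_insert _ _)
      exact (continuous_id.dist continuous_const).comp_continuousOn this
    have hψcont : Continuous ψ := hA ψ hψk
    rw [ContinuousAt, tendsto_iff_dist_tendsto_zero]
    have := hψcont.tendsto a₀
    rwa [show ψ a₀ = 0 from dist_self _] at this
  -- Step C : H is continuous
  rw [continuous_iff_continuousAt]
  rintro ⟨a₀, y₀⟩
  rw [ContinuousAt, tendsto_iff_dist_tendsto_zero]
  have hg : Continuous fun p : A × Y =>
      dist (φ p.1) (φ a₀) + dist (H (a₀, p.2)) (H (a₀, y₀)) := by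
    apply Continuous.add
    · exact (hφcont.comp continuous_fst).dist continuous_const
    · exact (((hslice a₀).comp continuous_snd).dist continuous_const)
  have hg0 : Tendsto (fun p : A × Y =>
      dist (φ p.1) (φ a₀) + dist (H (a₀, p.2)) (H (a₀, y₀))) (𝓝 (a₀, y₀)) (𝓝 0) := by
    have := hg.tendsto (a₀, y₀)
    simpa using this
  apply squeeze_zero' (Filter.Eventually.of_forall fun p => dist_nonneg)
    (Filter.Eventually.of_forall ?_) hg0
  rintro ⟨a, y⟩
  calc dist (H (a, y)) (H (a₀, y₀))
      ≤ dist (H (a, y)) (H (a₀, y)) + dist (H (a₀, y)) (H (a₀, y₀)) := dist_triangle _ _ _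
    _ ≤ dist (φ a) (φ a₀) + dist (H (a₀, y)) (H (a₀, y₀)) := by
        have := ContinuousMap.dist_apply_le_dist (f := φ a) (g := φ a₀) y
        simp only [hφ, ContinuousMap.coe_mk] at this
        exact add_le_add this le_rfl





variable {κ : Cardinal.{u}} {ι : Type u} {X : ι → Type u} [∀ i, TopologicalSpace (X i)]
  [∀ i, CompactSpace (X i)] [∀ i, T2Space (X i)]

/-- L3 : restrictions of a κ-continuous function to "finite faces" are continuous. -/
lemma finite_face (hκ : ℵ₀ ≤ κ) (f : (∀ i, X i) → ℝ)
    (hk : ∀ B : Set (∀ i, X i), #B ≤ κ → ContinuousOn f B)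
    (ht0 : ∀ i, ∀ g : X i → ℝ,
      (∀ B : Set (X i), #B ≤ κ → ContinuousOn g B) → Continuous g)
    (F : Finset ι) (z : ∀ i, X i) :
    Continuous fun x : (∀ i, X i) => f (fun i => if i ∈ F then x i else z i) := by
  induction F using Finset.induction_on generalizing z with
  | empty =>
      have : (fun x : (∀ i, X i) => f (fun i => if i ∈ (∅ : Finset ι) then x i else z i))
          = fun _ => f z := by
        funext x
        simp
      rw [this]
      exact continuous_const
  | @insert a F ha IH =>
      -- the two-variable function
      set Ψ : X a × (∀ i, X i) → (∀ i, X i) := fun p =>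
        Function.update (fun i => if i ∈ F then p.2 i else z i) a p.1 with hΨ
      have hΨcont : Continuous Ψ := by
        apply continuous_pi
        intro i
        by_cases hi : i = a
        · subst hi
          have : (fun p : X i × (∀ j, X j) => Ψ p i) = fun p => p.1 := by
            funext p
            simp [hΨ, Function.update_self]
          rw [this]
          exact continuous_fst
        · have : (fun p : X a × (∀ j, X j) => Ψ p i)
              = fun p => if i ∈ F then p.2 i else z i := by
            funext p
            simp [hΨ, Function.update_of_ne hi]
          rw [this]
          exact Continuous.if_const _ ((continuous_apply i).comp continuous_snd)
            continuous_const
      set H : X a × (∀ i, X i) → ℝ := fun p => f (Ψ p) with hH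
      have hHcont : Continuous H := by
        apply twofactor hκ
        · intro g hg
          apply ht0 a g hg
        · intro B hB
          exact (hk (Ψ '' B) (le_trans Cardinal.mk_image_le hB)).comp
            hΨcont.continuousOn (mapsTo_image _ _)
        · intro p
          have heq : (fun y => H (p, y))
              = fun y : (∀ i, X i) => f (fun i => if i ∈ F then y i else
                  (Function.update z a p) i) := by
            funext y
            simp only [hH]
            congr 1
            funext i
            by_cases hi : i = a
            · subst hi
              simp [hΨ, Function.update_self, ha]
            · simp [hΨ, Function.update_of_ne hi]
          rw [heq]
          exact IH (Function.update z a p)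
      have heq2 : (fun x : (∀ i, X i) => f (fun i => if i ∈ insert a F then x i else z i))
          = fun x => H (x a, x) := by
        funext x
        simp only [hH]
        congr 1
        funext i
        by_cases hi : i = a
        · subst hi
          simp [hΨ, Function.update_self]
        · simp [hΨ, Function.update_of_ne hi, Finset.mem_insert, hi]
      rw [heq2]
      exact hHcont.comp ((continuous_apply a).prodMk continuous_id)

/-- L5 : "cube corner" lemma.  f can be finitely approximated at any mix. -/
lemma corner (hκ : ℵ₀ ≤ κ) (hι : #ι ≤ 2 ^ κ) (f : (∀ i, X i) → ℝ)
    (hk : ∀ B : Set (∀ i, X i), #B ≤ κ → ContinuousOn f B)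
    (x w : ∀ i, X i) {ε : ℝ} (hε : 0 < ε) :
    ∃ F : Finset ι, dist (f (fun i => if i ∈ F then x i else w i)) (f x) ≤ ε := by
  set Φ : (ι → Bool) → (∀ i, X i) := fun s i => if s i then x i else w i with hΦ
  have hΦcont : Continuous Φ := by
    apply continuous_pi
    intro i
    exact (continuous_of_discreteTopology (α := Bool)
      (f := fun b => if b then x i else w i)).comp (continuous_apply i)
  -- κ-continuity of f ∘ Φ
  have hkΦ : ∀ B : Set (ι → Bool), #B ≤ κ → ContinuousOn (f ∘ Φ) B := by
    intro B hB
    exact (hk (Φ '' B) (le_trans Cardinal.mk_image_le hB)).comp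
      hΦcont.continuousOn (mapsTo_image _ _)
  -- dense κ-family
  obtain ⟨T, e, hT, hpat⟩ := exists_pattern_family hκ hι
  have hdense : Dense (Set.range e) := by
    rw [dense_iff_inter_open]
    intro U hU hUne
    obtain ⟨s₀, hs₀⟩ := hUne
    obtain ⟨F, ub, hub, hsub⟩ := (isOpen_pi_iff.mp hU) s₀ hs₀
    obtain ⟨t, ht⟩ := hpat F s₀
    refine ⟨e t, ?_, ⟨t, rfl⟩⟩
    apply hsub
    intro i hi
    rw [ht i hi]
    exact (hub i hi).2
  have hcont : Continuous (f ∘ Φ) :=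
    continuous_of_dense hκ (f ∘ Φ) hkΦ (Set.range e) hdense
      (le_trans Cardinal.mk_range_le hT)
  -- continuity at the all-true corner
  have hat := (hcont.tendsto (fun _ => true))
  rw [Metric.tendsto_nhds] at hat
  have hev := hat ε hε
  rw [eventually_iff, mem_nhds_iff] at hev
  obtain ⟨V, hVsub, hVopen, hVmem⟩ := hev
  obtain ⟨F, ub, hub, hsub⟩ := (isOpen_pi_iff.mp hVopen) _ hVmem
  refine ⟨F, ?_⟩
  have hχ : (fun i => decide (i ∈ F)) ∈ V := by
    apply hsub
    intro i hi
    show decide (i ∈ F) ∈ ub i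
    rw [decide_eq_true (Finset.mem_coe.mp hi)]
    exact (hub i hi).2
  have := hVsub hχ
  simp only [Set.mem_setOf_eq] at this
  have heq1 : Φ (fun i => decide (i ∈ F)) = fun i => if i ∈ F then x i else w i := by
    funext i
    by_cases hi : i ∈ F <;> simp [hΦ, hi]
  have heq2 : Φ (fun _ => true) = x := by
    funext i
    simp [hΦ]
  rw [Function.comp_apply, Function.comp_apply, heq1, heq2] at this
  exact le_of_lt this


/-- L6 : the restriction of a κ-continuous function to a face over a set of
coordinates of size ≤ κ is continuous. -/
lemma kappa_face (hκ : ℵ₀ ≤ κ) (f : (∀ i, X i) → ℝ)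
    (hk : ∀ B : Set (∀ i, X i), #B ≤ κ → ContinuousOn f B)
    (ht0 : ∀ i, ∀ g : X i → ℝ,
      (∀ B : Set (X i), #B ≤ κ → ContinuousOn g B) → Continuous g)
    {J : Set ι} (hJ : #J ≤ κ) (w : ∀ i, X i) :
    ContinuousOn f {x | ∀ i, i ∉ J → x i = w i} := by
  set face : Set (∀ i, X i) := {x | ∀ i, i ∉ J → x i = w i} with hface
  set ρ : Finset (↥J) → (∀ i, X i) → (∀ i, X i) :=
    fun F x i => if i ∈ F.image Subtype.val then x i else w i with hρ
  have hgcont : ∀ F : Finset (↥J), Continuous fun x => f (ρ F x) :=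
    fun F => finite_face hκ f hk ht0 (F.image Subtype.val) w
  -- cardinal bound for Finset ↥J
  have hFinJ : #(Finset (↥J)) ≤ κ := by
    rcases finite_or_infinite (↥J) with hfin | hinf
    · exact le_trans (Cardinal.mk_le_aleph0) hκ
    · rw [Cardinal.mk_finset_of_infinite]
      exact hJ
  -- uniform approximation
  have UNIF : ∀ ε : ℝ, 0 < ε → ∃ F : Finset (↥J),
      ∀ x ∈ face, dist (f (ρ F x)) (f x) ≤ ε := by
    intro ε hε
    by_contra hcon
    push_neg at hcon
    -- witnesses
    set xw : Finset (↥J) → (∀ i, X i) := fun F => (hcon F).choose with hxw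
    have hxw1 : ∀ F, xw F ∈ face := fun F => (hcon F).choose_spec.1
    have hxw2 : ∀ F, ε < dist (f (ρ F (xw F))) (f (xw F)) :=
      fun F => (hcon F).choose_spec.2
    set P : Finset (↥J) → (∀ i, X i) × (∀ i, X i) := fun F => (xw F, ρ F (xw F)) with hP
    haveI : Nonempty (Finset (↥J)) := ⟨∅⟩
    obtain ⟨z, -, hz⟩ := isCompact_univ.exists_clusterPt
      (f := map P atTop) (le_principal_iff.mpr univ_mem)
    -- the two components of the cluster point agree
    have hzeq : z.1 = z.2 := by
      funext i
      by_cases hi : i ∈ J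
      · have hev : ∀ᶠ F : Finset (↥J) in atTop, P F ∈ {p : (∀ i, X i) × (∀ i, X i) | p.1 i = p.2 i} := by
          rw [eventually_atTop]
          refine ⟨{⟨i, hi⟩}, fun F hF => ?_⟩
          have : i ∈ F.image Subtype.val :=
            Finset.mem_image.mpr ⟨⟨i, hi⟩, hF (Finset.mem_singleton_self _), rfl⟩
          simp only [hP, Set.mem_setOf_eq, hρ, if_pos this]
        have hmem : {p : (∀ i, X i) × (∀ i, X i) | p.1 i = p.2 i} ∈ map P atTop :=
          mem_map.mpr (by filter_upwards [hev] with F hF using hF)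
        have hzc : z ∈ closure {p : (∀ i, X i) × (∀ i, X i) | p.1 i = p.2 i} := by
          rw [mem_closure_iff_clusterPt]
          exact hz.mono (le_principal_iff.mpr hmem)
        have hclosed : IsClosed {p : (∀ i, X i) × (∀ i, X i) | p.1 i = p.2 i} :=
          isClosed_eq ((continuous_apply i).comp continuous_fst)
            ((continuous_apply i).comp continuous_snd)
        exact hclosed.closure_subset hzc
      · -- both components are w i
        have hev : ∀ᶠ F : Finset (↥J) in atTop,
            P F ∈ {p : (∀ i, X i) × (∀ i, X i) | p.1 i = w i ∧ p.2 i = w i} := by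
          apply Filter.Eventually.of_forall
          intro F
          constructor
          · exact hxw1 F i hi
          · have : i ∉ F.image Subtype.val := by
              intro hmem
              obtain ⟨j, -, hj⟩ := Finset.mem_image.mp hmem
              exact hi (hj ▸ j.2)
            simp only [hP, hρ, if_neg this]
        have hmem : {p : (∀ i, X i) × (∀ i, X i) | p.1 i = w i ∧ p.2 i = w i} ∈ map P atTop :=
          mem_map.mpr (by filter_upwards [hev] with F hF using hF)
        have hzc : z ∈ closure {p : (∀ i, X i) × (∀ i, X i) | p.1 i = w i ∧ p.2 i = w i} := by
          rw [mem_closure_iff_clusterPt]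
          exact hz.mono (le_principal_iff.mpr hmem)
        have hclosed : IsClosed {p : (∀ i, X i) × (∀ i, X i) | p.1 i = w i ∧ p.2 i = w i} :=
          IsClosed.inter (isClosed_eq ((continuous_apply i).comp continuous_fst) continuous_const)
            (isClosed_eq ((continuous_apply i).comp continuous_snd) continuous_const)
        have := hclosed.closure_subset hzc
        exact this.1.trans this.2.symm
    -- the small set
    set Aset : Set (∀ i, X i) := Set.range xw ∪ (Set.range (fun F => ρ F (xw F)) ∪ {z.1})
      with hAset
    have hAk : #Aset ≤ κ := by
      have h1 : #(Set.range xw) ≤ κ := le_trans Cardinal.mk_range_le hFinJ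
      have h2 : #(Set.range (fun F => ρ F (xw F))) ≤ κ := le_trans Cardinal.mk_range_le hFinJ
      have h3 : #({z.1} : Set (∀ i, X i)) ≤ κ :=
        le_trans (le_of_eq (Cardinal.mk_singleton _)) (le_trans Cardinal.one_le_aleph0 hκ)
      have e1 := Cardinal.mk_union_le (Set.range xw)
        ((Set.range (fun F => ρ F (xw F))) ∪ ({z.1} : Set (∀ i, X i)))
      have e2 := Cardinal.mk_union_le (Set.range (fun F => ρ F (xw F)))
        ({z.1} : Set (∀ i, X i))
      refine le_trans e1 ?_
      exact le_trans (add_le_add h1 (le_trans e2 (le_trans (add_le_add h2 h3)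
        (le_of_eq (Cardinal.add_eq_self hκ))))) (le_of_eq (Cardinal.add_eq_self hκ))
    have hz1A : z.1 ∈ Aset := Or.inr (Or.inr rfl)
    have hCWA : ContinuousWithinAt f Aset z.1 := hk Aset hAk z.1 hz1A
    have hev2 := (Metric.tendsto_nhds.mp hCWA) (ε/2) (by linarith)
    rw [eventually_iff, mem_nhdsWithin] at hev2
    obtain ⟨V, hVopen, hzV, hVsub⟩ := hev2
    -- the cluster point yields a pair inside V × V
    have hVV : (V ×ˢ V : Set ((∀ i, X i) × (∀ i, X i))) ∈ 𝓝 z := by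
      have hzz : z = (z.1, z.1) := by
        conv_lhs => rw [← Prod.mk.eta (p := z)]
        rw [← hzeq]
      rw [hzz]
      exact prod_mem_nhds (hVopen.mem_nhds hzV) (hVopen.mem_nhds hzV)
    obtain ⟨p, hpVV, hprange⟩ := (clusterPt_iff_nonempty.mp hz) hVV (range_mem_map)
    obtain ⟨F, hF⟩ := hprange
    have hx1 : xw F ∈ V ∩ Aset := by
      constructor
      · have := hpVV.1
        rw [← hF] at this
        exact this
      · exact Or.inl ⟨F, rfl⟩
    have hx2 : ρ F (xw F) ∈ V ∩ Aset := by
      constructor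
      · have := hpVV.2
        rw [← hF] at this
        exact this
      · exact Or.inr (Or.inl ⟨F, rfl⟩)
    have d1 : dist (f (xw F)) (f z.1) < ε/2 := hVsub hx1
    have d2 : dist (f (ρ F (xw F))) (f z.1) < ε/2 := hVsub hx2
    have : dist (f (ρ F (xw F))) (f (xw F)) < ε := by
      calc dist (f (ρ F (xw F))) (f (xw F))
          ≤ dist (f (ρ F (xw F))) (f z.1) + dist (f z.1) (f (xw F)) := dist_triangle _ _ _
        _ < ε/2 + ε/2 := add_lt_add d2 (by rw [dist_comm]; exact d1)
        _ = ε := by ring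
    exact absurd this (not_lt.mpr (le_of_lt (hxw2 F)))
  -- conclude continuity on the face
  intro x₀ hx₀
  rw [ContinuousWithinAt, Metric.tendsto_nhds]
  intro ε hε
  obtain ⟨F, hF⟩ := UNIF (ε/3) (by linarith)
  have hgc := ((hgcont F).tendsto x₀)
  rw [Metric.tendsto_nhds] at hgc
  have hev3 : ∀ᶠ y in 𝓝[face] x₀, dist (f (ρ F y)) (f (ρ F x₀)) < ε/3 :=
    Filter.Eventually.filter_mono nhdsWithin_le_nhds (hgc (ε/3) (by linarith))
  have hev4 : ∀ᶠ y in 𝓝[face] x₀, y ∈ face := eventually_mem_nhdsWithin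
  filter_upwards [hev3, hev4] with y h1 h2
  have b1 : dist (f y) (f (ρ F y)) ≤ ε/3 := by rw [dist_comm]; exact hF y h2
  have b3 : dist (f (ρ F x₀)) (f x₀) ≤ ε/3 := hF x₀ hx₀
  calc dist (f y) (f x₀)
      ≤ dist (f y) (f (ρ F y)) + dist (f (ρ F y)) (f (ρ F x₀)) + dist (f (ρ F x₀)) (f x₀) :=
        dist_triangle4 _ _ _ _
    _ < ε/3 + ε/3 + ε/3 := by
        have := add_lt_add_of_le_of_lt b1 h1
        linarith
    _ = ε := by ring

/-- Main lemma: with the hypotheses in `ContinuousOn` form. -/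
lemma main_lemma (hκ : ℵ₀ ≤ κ) (hι : #ι ≤ 2 ^ κ) (f : (∀ i, X i) → ℝ)
    (hk : ∀ B : Set (∀ i, X i), #B ≤ κ → ContinuousOn f B)
    (ht0 : ∀ i, ∀ g : X i → ℝ,
      (∀ B : Set (X i), #B ≤ κ → ContinuousOn g B) → Continuous g) :
    Continuous f := by
  rw [continuous_iff_continuousAt]
  intro w
  by_contra hc
  rw [ContinuousAt, Metric.tendsto_nhds] at hc
  push_neg at hc
  obtain ⟨ε, hε, hfreq⟩ := hc
  -- stream of finite-support witnesses in every neighborhood of w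
  have stream : ∀ U : Set (∀ i, X i), IsOpen U → w ∈ U →
      ∃ u, {i | u i ≠ w i}.Finite ∧ 15/16*ε ≤ dist (f u) (f w) ∧ u ∈ U := by
    intro U hU hwU
    obtain ⟨F, V, hFV, hsub⟩ := isOpen_pi_iff.mp hU w hwU
    have hbox : ((↑F : Set ι).pi V) ∈ 𝓝 w := by
      apply IsOpen.mem_nhds
      · exact isOpen_set_pi F.finite_toSet (fun i hi => (hFV i (Finset.mem_coe.mp hi)).1)
      · exact fun i hi => (hFV i (Finset.mem_coe.mp hi)).2
    obtain ⟨x, hxbox, hxd⟩ := Filter.frequently_iff.mp hfreq hbox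
    obtain ⟨F', hF'⟩ := corner hκ hι f hk x w (show (0:ℝ) < ε/16 by linarith)
    refine ⟨fun i => if i ∈ F' then x i else w i, ?_, ?_, ?_⟩
    · apply Set.Finite.subset F'.finite_toSet
      intro i hi
      simp only [Set.mem_setOf_eq] at hi
      by_contra hiF
      rw [if_neg (fun h => hiF (Finset.mem_coe.mpr h))] at hi
      exact hi rfl
    · have tri := dist_triangle (f x) (f (fun i => if i ∈ F' then x i else w i)) (f w)
      have hc' := dist_comm (f x) (f (fun i => if i ∈ F' then x i else w i))
      linarith
    · apply hsub
      intro i hi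
      show (if i ∈ F' then x i else w i) ∈ V i
      by_cases h : i ∈ F'
      · rw [if_pos h]
        exact hxbox i hi
      · rw [if_neg h]
        exact (hFV i (Finset.mem_coe.mp hi)).2
  -- case split
  by_cases hA : ∀ F : Finset ι, ∃ u, {i | u i ≠ w i}.Finite ∧
      ε/2 ≤ dist (f u) (f w) ∧ ∀ i ∈ F, u i = w i
  · -- CASE A : witnesses with supports dodging every finite set
    obtain ⟨u, hPa, hra⟩ := exists_seq_of_forall_finset_exists
      (fun v : ∀ i, X i => {i | v i ≠ w i}.Finite ∧ ε/2 ≤ dist (f v) (f w))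
      (fun v v' => ∀ i, v i ≠ w i → v' i = w i)
      (by
        intro s hs
        have hfin : (⋃ v ∈ s, {i | v i ≠ w i}).Finite :=
          Set.Finite.biUnion s.finite_toSet (fun v hv => (hs v hv).1)
        obtain ⟨y, hy1, hy2, hy3⟩ := hA hfin.toFinset
        refine ⟨y, ⟨hy1, hy2⟩, ?_⟩
        intro v hv i hiv
        apply hy3
        rw [Set.Finite.mem_toFinset]
        exact Set.mem_biUnion hv hiv)
    set S : ℕ → Set ι := fun n => {i | u n i ≠ w i} with hS
    have hdisj : ∀ m n, m < n → ∀ i, i ∈ S m → i ∉ S n := by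
      intro m n hmn i him hin
      exact hin (hra m n hmn i him)
    have hJc : #(⋃ n, S n) ≤ κ := by
      have : (⋃ n, S n).Countable := Set.countable_iUnion (fun n => (hPa n).1.countable)
      haveI := this.to_subtype
      exact le_trans Cardinal.mk_le_aleph0 hκ
    have hface := kappa_face hκ f hk ht0 hJc w
    have hwface : w ∈ {x | ∀ i, i ∉ (⋃ n, S n) → x i = w i} := fun i _ => rfl
    have hCWA := hface w hwface
    have hev := (Metric.tendsto_nhds.mp hCWA) (ε/2) (by linarith)
    rw [eventually_iff, mem_nhdsWithin] at hev
    obtain ⟨V, hVopen, hwV, hVsub⟩ := hev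
    obtain ⟨F, Vb, hFVb, hsub⟩ := isOpen_pi_iff.mp hVopen w hwV
    have hfind : ∃ n, ∀ i ∈ F, i ∉ S n := by
      by_contra hcon
      push_neg at hcon
      set pick : ℕ → ι := fun n => (hcon n).choose with hpick
      have hp1 : ∀ n, pick n ∈ F := fun n => (hcon n).choose_spec.1
      have hp2 : ∀ n, pick n ∈ S n := fun n => (hcon n).choose_spec.2
      have hinj : Function.Injective pick := by
        intro m n hmn
        by_contra hne
        rcases Ne.lt_or_gt hne with h | h
        · have : pick m ∈ S n := by rw [hmn]; exact hp2 n
          exact (hdisj m n h (pick m) (hp2 m)) this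
        · have : pick n ∈ S m := by rw [← hmn]; exact hp2 m
          exact (hdisj n m h (pick n) (hp2 n)) this
      have hinf : (Set.range pick).Infinite := Set.infinite_range_of_injective hinj
      have hsubF : Set.range pick ⊆ ↑F := by
        rintro _ ⟨n, rfl⟩
        exact hp1 n
      exact hinf (F.finite_toSet.subset hsubF)
    obtain ⟨n, hn⟩ := hfind
    have humem : u n ∈ V := by
      apply hsub
      intro i hi
      have heq : u n i = w i := by
        have := hn i (Finset.mem_coe.mp hi)
        simp only [hS, Set.mem_setOf_eq] at this
        exact not_not.mp this
      rw [heq]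
      exact (hFVb i (Finset.mem_coe.mp hi)).2
    have hufc : u n ∈ {x | ∀ i, i ∉ (⋃ n, S n) → x i = w i} := by
      intro i hiJ
      by_contra hne
      exact hiJ (Set.mem_iUnion.mpr ⟨n, hne⟩)
    have := hVsub ⟨humem, hufc⟩
    simp only [Set.mem_setOf_eq] at this
    exact absurd this (not_lt.mpr (hPa n).2)
  · -- CASE B : a finite set F₀ carries the oscillation
    push_neg at hA
    obtain ⟨F₀, hF₀'⟩ := hA
    have hF₀ : ∀ u, {i | u i ≠ w i}.Finite → (∀ i ∈ F₀, u i = w i) →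
        dist (f u) (f w) < ε/2 := by
      intro u h1 h2
      by_contra hge
      obtain ⟨i, hiF, hne⟩ := hF₀' u h1 (not_lt.mp hge)
      exact hne (h2 i hiF)
    set μ : (∀ i, X i) → (∀ i, X i) → (∀ i, X i) :=
      fun z x i => if i ∈ F₀ then x i else z i with hμ
    have hgcont : ∀ z, Continuous fun x => f (μ z x) :=
      fun z => finite_face hκ f hk ht0 F₀ z
    have hmuleft : ∀ x₀ : (∀ i, X i), Continuous fun z => μ z x₀ := by
      intro x₀
      apply continuous_pi
      intro i
      by_cases hi : i ∈ F₀
      · have : (fun z : (∀ i, X i) => μ z x₀ i) = fun _ => x₀ i := by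
          funext z
          simp [hμ, hi]
        rw [this]
        exact continuous_const
      · have : (fun z : (∀ i, X i) => μ z x₀ i) = fun z => z i := by
          funext z
          simp [hμ, hi]
        rw [this]
        exact continuous_apply i
    -- the recursive sequence of witnesses
    obtain ⟨p, hPp, hrr⟩ := exists_seq_of_forall_finset_exists
      (fun q : (∀ i, X i) × ℕ => {i | q.1 i ≠ w i}.Finite ∧ 15/16*ε ≤ dist (f q.1) (f w))
      (fun q q' => q.2 < q'.2 ∧
        dist (f (μ q.1 q'.1)) (f (μ q.1 w)) < 1/((q'.2 : ℝ)+1))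
      (by
        intro s hs
        set N : ℕ := (s.sup (fun q => q.2)) + 1 with hN
        have hOopen : IsOpen (⋂ q ∈ s,
            {x : ∀ i, X i | dist (f (μ q.1 x)) (f (μ q.1 w)) < 1/((N : ℝ)+1)}) := by
          apply isOpen_biInter_finset
          intro q hq
          exact isOpen_lt ((hgcont q.1).dist continuous_const) continuous_const
        have hwO : w ∈ ⋂ q ∈ s,
            {x : ∀ i, X i | dist (f (μ q.1 x)) (f (μ q.1 w)) < 1/((N : ℝ)+1)} := by
          apply Set.mem_iInter₂.mpr
          intro q hq
          simp only [Set.mem_setOf_eq, dist_self]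
          positivity
        obtain ⟨v, hv1, hv2, hv3⟩ := stream _ hOopen hwO
        refine ⟨(v, N), ⟨hv1, hv2⟩, ?_⟩
        intro q hq
        constructor
        · have : q.2 ≤ s.sup (fun q => q.2) := Finset.le_sup hq
          omega
        · exact Set.mem_iInter₂.mp hv3 q hq)
    set u : ℕ → (∀ i, X i) := fun k => (p k).1 with hu
    have hnmono : StrictMono (fun k => (p k).2) := fun a b hab => (hrr a b hab).1
    have hbound : ∀ j k, j < k →
        dist (f (μ (u j) (u k))) (f (μ (u j) w)) < 1/((k : ℝ)+1) := by
      intro j k hjk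
      have h1 := (hrr j k hjk).2
      have h2 : ((k : ℝ)+1) ≤ (((p k).2 : ℝ)+1) := by
        have := hnmono.le_apply (x := k)
        have : (k : ℝ) ≤ ((p k).2 : ℝ) := by exact_mod_cast this
        linarith
      have h3 : (1:ℝ)/(((p k).2 : ℝ)+1) ≤ 1/((k : ℝ)+1) :=
        one_div_le_one_div_of_le (by positivity) h2
      exact lt_of_lt_of_le h1 h3
    -- cluster point
    obtain ⟨ustar, -, hclust⟩ := isCompact_univ.exists_clusterPt
      (f := map u atTop) (le_principal_iff.mpr univ_mem)
    haveI hFne : (atTop ⊓ comap u (𝓝 ustar)).NeBot := neBot_inf_comap hclust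
    set ℱ := atTop ⊓ comap u (𝓝 ustar) with hℱ
    have htu : Tendsto u ℱ (𝓝 ustar) := tendsto_iff_comap.mpr inf_le_right
    have hℱle : ℱ ≤ atTop := inf_le_left
    -- (α)
    have halpha : ∀ j, f (μ (u j) ustar) = f (μ (u j) w) := by
      intro j
      have t1 : Tendsto (fun k => f (μ (u j) (u k))) atTop (𝓝 (f (μ (u j) w))) := by
        rw [tendsto_iff_dist_tendsto_zero]
        apply squeeze_zero' (Filter.Eventually.of_forall fun k => dist_nonneg)
          ?_ tendsto_one_div_add_atTop_nhds_zero_nat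
        rw [eventually_atTop]
        exact ⟨j+1, fun k hk => le_of_lt (hbound j k (by omega))⟩
      have t2 : Tendsto (fun k => f (μ (u j) (u k))) ℱ (𝓝 (f (μ (u j) ustar))) :=
        ((hgcont (u j)).tendsto ustar).comp htu
      exact tendsto_nhds_unique t2 (t1.mono_left hℱle)
    -- the small set for κ-continuity
    set C : Set (∀ i, X i) := Set.range (fun k => μ (u k) ustar) ∪
      (Set.range (fun k => μ (u k) w) ∪ (Set.range u ∪ {ustar, μ ustar w})) with hC
    have hCk : #C ≤ κ := by
      have b1 : #(Set.range (fun k : ℕ => μ (u k) ustar)) ≤ κ := by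
        haveI := (Set.countable_range (fun k : ℕ => μ (u k) ustar)).to_subtype
        exact le_trans Cardinal.mk_le_aleph0 hκ
      have b2 : #(Set.range (fun k : ℕ => μ (u k) w)) ≤ κ := by
        haveI := (Set.countable_range (fun k : ℕ => μ (u k) w)).to_subtype
        exact le_trans Cardinal.mk_le_aleph0 hκ
      have b3 : #(Set.range u) ≤ κ := by
        haveI := (Set.countable_range u).to_subtype
        exact le_trans Cardinal.mk_le_aleph0 hκ
      have b4 : #({ustar, μ ustar w} : Set (∀ i, X i)) ≤ κ := by
        haveI := (((Set.finite_singleton (μ ustar w)).insert ustar).countable).to_subtype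
        exact le_trans Cardinal.mk_le_aleph0 hκ
      have e3 := Cardinal.mk_union_le (Set.range u) ({ustar, μ ustar w} : Set (∀ i, X i))
      have e2 := Cardinal.mk_union_le (Set.range (fun k : ℕ => μ (u k) w))
        (Set.range u ∪ ({ustar, μ ustar w} : Set (∀ i, X i)))
      have e1 := Cardinal.mk_union_le (Set.range (fun k : ℕ => μ (u k) ustar))
        (Set.range (fun k : ℕ => μ (u k) w) ∪ (Set.range u ∪ ({ustar, μ ustar w} : Set (∀ i, X i))))
      refine le_trans e1 ?_
      have c3 := le_trans e3 (le_trans (add_le_add b3 b4) (le_of_eq (Cardinal.add_eq_self hκ)))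
      have c2 := le_trans e2 (le_trans (add_le_add b2 c3) (le_of_eq (Cardinal.add_eq_self hκ)))
      exact le_trans (add_le_add b1 c2) (le_of_eq (Cardinal.add_eq_self hκ))
    have hustarC : ustar ∈ C := Or.inr (Or.inr (Or.inr (Or.inl rfl)))
    have hmuwC : μ ustar w ∈ C := Or.inr (Or.inr (Or.inr (Or.inr rfl)))
    have hCWA1 : ContinuousWithinAt f C ustar := hk C hCk ustar hustarC
    have hCWA2 : ContinuousWithinAt f C (μ ustar w) := hk C hCk _ hmuwC
    -- limits
    have hmuu : μ ustar ustar = ustar := by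
      funext i
      simp [hμ]
    have tv : Tendsto (fun k => μ (u k) ustar) ℱ (𝓝 ustar) := by
      have := ((hmuleft ustar).tendsto ustar).comp htu
      rwa [hmuu] at this
    have tv' : Tendsto (fun k => μ (u k) w) ℱ (𝓝 (μ ustar w)) :=
      ((hmuleft w).tendsto ustar).comp htu
    have T1 : Tendsto (fun k => f (μ (u k) ustar)) ℱ (𝓝 (f ustar)) :=
      Filter.Tendsto.comp hCWA1 (tendsto_nhdsWithin_iff.mpr
        ⟨tv, Filter.Eventually.of_forall fun k => Or.inl ⟨k, rfl⟩⟩)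
    have T2 : Tendsto (fun k => f (μ (u k) w)) ℱ (𝓝 (f (μ ustar w))) :=
      Filter.Tendsto.comp hCWA2 (tendsto_nhdsWithin_iff.mpr
        ⟨tv', Filter.Eventually.of_forall fun k => Or.inr (Or.inl ⟨k, rfl⟩)⟩)
    have T3 : Tendsto (fun k => f (u k)) ℱ (𝓝 (f ustar)) :=
      Filter.Tendsto.comp hCWA1 (tendsto_nhdsWithin_iff.mpr
        ⟨htu, Filter.Eventually.of_forall fun k => Or.inr (Or.inr (Or.inl ⟨k, rfl⟩))⟩)
    -- (β)
    have hbeta : f ustar = f (μ ustar w) := by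
      apply tendsto_nhds_unique T1
      have hfeq : (fun k => f (μ (u k) ustar)) = fun k => f (μ (u k) w) :=
        funext halpha
      rw [hfeq]
      exact T2
    -- (γ)
    have hlow : ∀ k, 7/16*ε ≤ dist (f (u k)) (f (μ (u k) w)) := by
      intro k
      have d1 : 15/16*ε ≤ dist (f (u k)) (f w) := (hPp k).2
      have hfin2 : {i | μ (u k) w i ≠ w i}.Finite := by
        apply Set.Finite.subset (hPp k).1
        intro i hi
        simp only [Set.mem_setOf_eq, hμ] at hi ⊢
        by_cases h : i ∈ F₀
        · rw [if_pos h] at hi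
          exact absurd rfl hi
        · rw [if_neg h] at hi
          exact hi
      have hagree : ∀ i ∈ F₀, μ (u k) w i = w i := by
        intro i hi
        simp [hμ, hi]
      have d2 : dist (f (μ (u k) w)) (f w) < ε/2 := hF₀ (μ (u k) w) hfin2 hagree
      have tri := dist_triangle (f (u k)) (f (μ (u k) w)) (f w)
      linarith
    have Tdist : Tendsto (fun k => dist (f (u k)) (f (μ (u k) w))) ℱ
        (𝓝 (dist (f ustar) (f (μ ustar w)))) := T3.dist T2
    have hfinal : 7/16*ε ≤ dist (f ustar) (f (μ ustar w)) :=
      ge_of_tendsto Tdist (Filter.Eventually.of_forall hlow)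
    rw [hbeta, dist_self] at hfinal
    linarith
end FTProd

open Cardinal Set

/-- (Main Theorem) The functional tightness of a product of 2^κ compact Hausdorff
spaces of functional tightness ≤ κ is at most κ. -/
theorem functionalTightness_product_two_pow
    (κ : Cardinal.{u}) (hκ : Cardinal.aleph0 ≤ κ)
    {ι : Type u} (hι : #ι = 2 ^ κ)
    {X : ι → Type u} [∀ i, TopologicalSpace (X i)]
    [∀ i, CompactSpace (X i)] [∀ i, T2Space (X i)]
    (ht0 : ∀ i, ∀ g : X i → ℝ,
      (∀ A : Set (X i), #A ≤ κ → Continuous (A.restrict g)) → Continuous g)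
    (f : (∀ i, X i) → ℝ)
    (hkappa : ∀ A : Set (∀ i, X i), #A ≤ κ → Continuous (A.restrict f)) :
    Continuous f := by
  apply FTProd.main_lemma hκ (le_of_eq hι) f
  · intro B hB
    exact continuousOn_iff_continuous_restrict.mpr (hkappa B hB)
  · intro i g hg
    exact ht0 i g (fun A hA => continuousOn_iff_continuous_restrict.mp (hg A hA))
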